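/- Let 1 ≤ m ≤ M, let μ be a probability measure supported on [m,M], let c > 1, and let q : [m,M] → [1,∞) be a measurable map satisfying z ≤ q(z) ≤ e^{1/c}·z for all z ∈ [m,M]. Then for every bidding strategy X, cons(X,μ) ≤ e^{1/c} · cons(X, q_*μ), where q_*μ denotes the pushforward of μ under q. -/
import Mathlib


open MeasureTheory

/-- The least index `i` such that the bid `X i` reaches the target `u`. -/
noncomputable def costIdx (X : ℕ → ℝ) (u : ℝ) : ℕ := sInf {i : ℕ | u ≤ X i}

/-- The cost of bidding strategy `X` on target `u`: the sum of bids up to and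
including the first bid that is at least `u`. -/
noncomputable def cost (X : ℕ → ℝ) (u : ℝ) : ℝ :=
  ∑ j ∈ Finset.range (costIdx X u + 1), X j

/-- A bidding strategy: a strictly increasing sequence of positive reals tending to infinity. -/
def IsBiddingStrategy (X : ℕ → ℝ) : Prop :=
  StrictMono X ∧ (∀ i, 0 < X i) ∧ Filter.Tendsto X Filter.atTop Filter.atTop

/-- The consistency of `X` with respect to a distributional prediction `μ`:
the ratio of the expected cost to the expected target. -/
noncomputable def consM (X : ℕ → ℝ) (μ : Measure ℝ) : ℝ :=
  (∫ z, cost X z ∂μ) / (∫ z, z ∂μ)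

lemma cost_nonneg' {X : ℕ → ℝ} (hX : ∀ i, 0 < X i) (u : ℝ) : 0 ≤ cost X u :=
  Finset.sum_nonneg fun i _ => (hX i).le

lemma cost_mono' {X : ℕ → ℝ} (hX : IsBiddingStrategy X) : Monotone (cost X) := by
  intro u v huv
  obtain ⟨_, hpos, htop⟩ := hX
  have hne : {i : ℕ | v ≤ X i}.Nonempty := by
    obtain ⟨i, hi⟩ := (htop.eventually (Filter.eventually_ge_atTop v)).exists
    exact ⟨i, hi⟩
  have hidx : costIdx X u ≤ costIdx X v :=
    csInf_le_csInf (OrderBot.bddBelow _) hne (fun i hi => le_trans huv hi)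
  exact Finset.sum_le_sum_of_subset_of_nonneg
    (Finset.range_subset_range.2 (by omega)) (fun i _ _ => (hpos i).le)

theorem stmt4 (m M c : ℝ) (hm : 1 ≤ m) (hmM : m ≤ M) (hc : 1 < c)
    (μ : Measure ℝ) [IsProbabilityMeasure μ] (hsupp : μ ((Set.Icc m M)ᶜ) = 0)
    (q : ℝ → ℝ) (hq : Measurable q)
    (hq1 : ∀ z ∈ Set.Icc m M, z ≤ q z)
    (hq2 : ∀ z ∈ Set.Icc m M, q z ≤ Real.exp (1 / c) * z)
    (X : ℕ → ℝ) (hX : IsBiddingStrategy X) :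
    consM X μ ≤ Real.exp (1 / c) * consM X (μ.map q) := by
  set E := Real.exp (1 / c) with hE
  have hE1 : (1 : ℝ) ≤ E := Real.one_le_exp (by positivity)
  have hmem : ∀ᵐ z ∂μ, z ∈ Set.Icc m M := by
    rw [MeasureTheory.ae_iff]
    exact hsupp
  have hpos := hX.2.1
  have hcmono := cost_mono' hX
  have hcmeas : Measurable (cost X) := hcmono.measurable
  -- integrability
  have hint_id : Integrable (fun z : ℝ => z) μ := by
    refine (integrable_const M).mono' measurable_id.aestronglyMeasurable ?_
    filter_upwards [hmem] with z hz
    rw [Real.norm_eq_abs, abs_of_nonneg (by linarith [hz.1])]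
    exact hz.2
  have hint_q : Integrable q μ := by
    refine (integrable_const (E * M)).mono' hq.aestronglyMeasurable ?_
    filter_upwards [hmem] with z hz
    rw [Real.norm_eq_abs, abs_of_nonneg (by linarith [hz.1, hq1 z hz])]
    calc q z ≤ E * z := hq2 z hz
    _ ≤ E * M := by nlinarith [hz.2]
  have hint_c : Integrable (fun z => cost X z) μ := by
    refine (integrable_const (cost X M)).mono' hcmeas.aestronglyMeasurable ?_
    filter_upwards [hmem] with z hz
    rw [Real.norm_eq_abs, abs_of_nonneg (cost_nonneg' hpos z)]
    exact hcmono hz.2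
  have hint_cq : Integrable (fun z => cost X (q z)) μ := by
    refine (integrable_const (cost X (E * M))).mono' (hcmeas.comp hq).aestronglyMeasurable ?_
    filter_upwards [hmem] with z hz
    rw [Real.norm_eq_abs, abs_of_nonneg (cost_nonneg' hpos _)]
    exact hcmono (le_trans (hq2 z hz) (by nlinarith [hz.2]))
  -- rewrite map integrals
  have hmap1 : ∫ z, z ∂(μ.map q) = ∫ z, q z ∂μ :=
    integral_map hq.aemeasurable aestronglyMeasurable_id
  have hmap2 : ∫ z, cost X z ∂(μ.map q) = ∫ z, cost X (q z) ∂μ :=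
    integral_map hq.aemeasurable hcmeas.aestronglyMeasurable
  set A := ∫ z, cost X z ∂μ with hA
  set A' := ∫ z, cost X (q z) ∂μ with hA'
  set B := ∫ z, (z : ℝ) ∂μ with hB
  set C := ∫ z, q z ∂μ with hC
  have hBm : m ≤ B := by
    have := integral_mono_ae (integrable_const m) hint_id (hmem.mono fun z hz => hz.1)
    simpa using this
  have hB0 : 0 < B := lt_of_lt_of_le (by linarith) hBm
  have hCm : m ≤ C := by
    have := integral_mono_ae (integrable_const m) hint_q
      (hmem.mono fun z hz => le_trans hz.1 (hq1 z hz))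
    simpa using this
  have hC0 : 0 < C := lt_of_lt_of_le (by linarith) hCm
  have hCB : C ≤ E * B := by
    have h := integral_mono_ae hint_q (hint_id.const_mul E) (hmem.mono fun z hz => hq2 z hz)
    rwa [integral_const_mul] at h
  have hAA' : A ≤ A' :=
    integral_mono_ae hint_c hint_cq (hmem.mono fun z hz => hcmono (hq1 z hz))
  have hA0 : 0 ≤ A :=
    integral_nonneg fun z => cost_nonneg' hpos z
  have hA'0 : 0 ≤ A' := le_trans hA0 hAA'
  rw [consM, consM, hmap1, hmap2]
  show A / B ≤ E * (A' / C)
  have h1 : A / B ≤ A' / B := by gcongr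
  have h2 : A' / B ≤ E * (A' / C) := by
    rw [mul_div_assoc', div_le_div_iff₀ hB0 hC0]
    nlinarith
  linarith
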